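/- arXiv:1509.06167 — 2 statements merged into one kernel-verified Lean document; each statement's English description precedes it below -/
import Mathlib

section
/- Let T be a string over an alphabet Σ and let Q be a node-string of T with |Q| ≥ 1. Then the set S = { a : ⌈|Q|/2⌉ ≤ a ≤ |Q| and Q.take a is a node-string of T } is nonempty (it contains |Q|), and for its least element â, both A₁ = Q.take â and A₂ = Q.drop â are node-strings of T with Q = A₁ ++ A₂. (This is the paper's Lemma 2: for every node ω of the suffix tree corresponding to Q there exists a halving pair α₁, α₂ corresponding to A₁ = Q[1,â] and A₂ = Q[â+1,·] for the smallest â ≥ ⌈|Q|/2⌉ such that α₁ exists in the suffix tree.) -/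
/-- A string `W` is right-branching in `T` if there are two distinct characters `c₁ ≠ c₂`
such that both `W ++ [c₁]` and `W ++ [c₂]` are substrings (infixes) of `T`. -/
def RightBranching {σ : Type*} (T W : List σ) : Prop :=
  ∃ c₁ c₂ : σ, c₁ ≠ c₂ ∧ (W ++ [c₁]) <:+: T ∧ (W ++ [c₂]) <:+: T

/-- `W` corresponds to an explicit node of the suffix tree of `T`:
`W` is empty, or a suffix of `T`, or a substring of `T` that is right-branching in `T`. -/
def NodeString {σ : Type*} (T W : List σ) : Prop :=
  W = [] ∨ W <:+ T ∨ (W <:+: T ∧ RightBranching T W)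

/-- paper's Lemma 2: Let `Q` be a node-string of `T` with `|Q| ≥ 1`, and let
`S = { a | ⌈|Q|/2⌉ ≤ a ≤ |Q| ∧ Q.take a is a node-string of T }`.  Then `|Q| ∈ S` (so `S`
is nonempty), and for its least element `â = sInf S`, both `A₁ = Q.take â` and
`A₂ = Q.drop â` are node-strings of `T`, with `Q = A₁ ++ A₂`. -/
theorem suffix_tree_halving_pair_exists {σ : Type*} (T Q : List σ)
    (hQ : NodeString T Q) (hlen : 1 ≤ Q.length)
    (S : Set ℕ)
    (hS : S = {a : ℕ | (Q.length + 1) / 2 ≤ a ∧ a ≤ Q.length ∧ NodeString T (Q.take a)}) :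
    Q.length ∈ S ∧
    NodeString T (Q.take (sInf S)) ∧
    NodeString T (Q.drop (sInf S)) ∧
    Q = Q.take (sInf S) ++ Q.drop (sInf S) := by
  set Sdef : Set ℕ := {a : ℕ | (Q.length + 1) / 2 ≤ a ∧ a ≤ Q.length ∧ NodeString T (Q.take a)} with hSdef
  subst hS
  have hmem : Q.length ∈ Sdef := by
    refine ⟨by omega, le_refl _, ?_⟩
    rw [List.take_length]
    exact hQ
  have hinf_mem : sInf Sdef ∈ Sdef := Nat.sInf_mem ⟨Q.length, hmem⟩
  have hdrop : ∀ a : ℕ, NodeString T (Q.drop a) := by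
    intro a
    rcases hQ with h0 | hsuf | ⟨hinfix, c₁, c₂, hne, h1, h2⟩
    · subst h0; simp at hlen
    · exact Or.inr (Or.inl ((Q.drop_suffix a).trans hsuf))
    · refine Or.inr (Or.inr ⟨(Q.drop_suffix a).isInfix.trans hinfix, c₁, c₂, hne, ?_, ?_⟩)
      · obtain ⟨v, hv⟩ := Q.drop_suffix a
        exact (List.IsSuffix.isInfix ⟨v, by rw [← List.append_assoc, hv]⟩ : Q.drop a ++ [c₁] <:+: Q ++ [c₁]).trans h1
      · obtain ⟨v, hv⟩ := Q.drop_suffix a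
        exact (List.IsSuffix.isInfix ⟨v, by rw [← List.append_assoc, hv]⟩ : Q.drop a ++ [c₂] <:+: Q ++ [c₂]).trans h2
  exact ⟨hmem, hinf_mem.2.2, hdrop _, (List.take_append_drop _ _).symm⟩
end

section
/- Let p = 2^x with x ≥ 1, let m be a natural number, and set r = m mod p. For 1 ≤ i ≤ p define len_i = ⌊m/p⌋ + 1 if reverseBits_x(i − 1) < r, and len_i = ⌊m/p⌋ otherwise. Then: (a) Σ_{i=1}^{p} len_i = m; and (b) for every level j with 1 ≤ j ≤ x and every block of consecutive indices B = {c·2^j + 1, ..., (c+1)·2^j} with 0 ≤ c < 2^{x−j}, the sum of len_i over the first half of B (indices c·2^j + 1, ..., c·2^j + 2^{j−1}) equals ⌈(Σ_{i∈B} len_i)/2⌉. (This is the correctness of the subquery length assignment in Algorithm 2 of the paper: the bit-reversal assignment of the ⌈m/p⌉-length subqueries guarantees that each of the lg p rounds of pairwise concatenation in Algorithm 1 merges exactly the halving pair, the left part having length ⌈·/2⌉ of the concatenation.) -/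
/-- `reverseBits x j` is the natural number obtained by writing `j` in binary with
exactly `x` bits and reversing the order of those bits. -/
def reverseBits (x j : ℕ) : ℕ :=
  ∑ t ∈ Finset.range x, if j.testBit t then 2 ^ (x - 1 - t) else 0

lemma reverseBits_zero' (j : ℕ) : reverseBits 0 j = 0 := by simp [reverseBits]

lemma reverseBits_succ' (x j : ℕ) :
    reverseBits (x + 1) j = (j % 2) * 2 ^ x + reverseBits x (j / 2) := by
  rw [reverseBits, Finset.sum_range_succ']
  have h0 : (if j.testBit 0 then 2 ^ (x + 1 - 1 - 0) else 0) = (j % 2) * 2 ^ x := by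
    rw [Nat.testBit_zero]
    rcases Nat.mod_two_eq_zero_or_one j with h | h <;> simp [h]
  rw [h0, add_comm, reverseBits]
  congr 1
  apply Finset.sum_congr rfl
  intro t ht
  rw [Nat.testBit_succ]
  congr 2
  omega

lemma reverseBits_lt' (x j : ℕ) : reverseBits x j < 2 ^ x := by
  induction x generalizing j with
  | zero => simp [reverseBits_zero']
  | succ x ih =>
    rw [reverseBits_succ']
    have h1 := ih (j / 2)
    have h2 : j % 2 ≤ 1 := by omega
    have : (j % 2) * 2 ^ x ≤ 2 ^ x := by
      calc (j % 2) * 2 ^ x ≤ 1 * 2 ^ x := Nat.mul_le_mul_right _ h2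
      _ = 2 ^ x := one_mul _
    have hp : (2:ℕ) ^ (x+1) = 2 ^ x + 2 ^ x := by rw [pow_succ]; ring
    omega

lemma reverseBits_inj' (x : ℕ) : ∀ j < 2^x, ∀ k < 2^x,
    reverseBits x j = reverseBits x k → j = k := by
  induction x with
  | zero => intro j hj k hk _; omega
  | succ x ih =>
    intro j hj k hk h
    rw [reverseBits_succ', reverseBits_succ'] at h
    have h1 := reverseBits_lt' x (j / 2)
    have h2 := reverseBits_lt' x (k / 2)
    have hj2 : j % 2 ≤ 1 := by omega
    have hk2 : k % 2 ≤ 1 := by omega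
    have heq : j % 2 = k % 2 ∧ reverseBits x (j/2) = reverseBits x (k/2) := by
      interval_cases hjm : j % 2 <;> interval_cases hkm : k % 2 <;> simp_all <;> omega
    have hp : (2:ℕ) ^ (x+1) = 2 ^ x + 2 ^ x := by rw [pow_succ]; ring
    have := ih (j/2) (by omega) (k/2) (by omega) heq.2
    omega

lemma reverseBits_image' (x : ℕ) :
    (Finset.range (2^x)).image (reverseBits x) = Finset.range (2^x) := by
  apply Finset.eq_of_subset_of_card_le
  · intro y hy
    simp only [Finset.mem_image, Finset.mem_range] at hy ⊢
    obtain ⟨j, _, rfl⟩ := hy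
    exact reverseBits_lt' x j
  · rw [Finset.card_image_of_injOn]
    intro a ha b hb
    simp only [Finset.mem_coe, Finset.mem_range] at ha hb
    exact reverseBits_inj' x a ha b hb

lemma card_filter_reverseBits (x : ℕ) (Q : ℕ → Prop) [DecidablePred Q] :
    ((Finset.range (2^x)).filter (fun j => Q (reverseBits x j))).card
      = ((Finset.range (2^x)).filter Q).card := by
  conv_rhs => rw [← reverseBits_image' x]
  rw [Finset.filter_image, Finset.card_image_of_injOn]
  intro a ha b hb
  simp only [Finset.coe_filter, Set.mem_setOf_eq, Finset.mem_range] at ha hb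
  exact reverseBits_inj' x a ha.1 b hb.1

lemma reverseBits_split' (j : ℕ) : ∀ x, j ≤ x → ∀ c t, t < 2^j →
    reverseBits x (c * 2^j + t)
      = 2^(x-j) * reverseBits j t + reverseBits (x-j) c := by
  induction j with
  | zero =>
    intro x hx c t ht
    interval_cases t
    simp [reverseBits_zero']
  | succ j ih =>
    intro x hx c t ht
    obtain ⟨y, rfl⟩ : ∃ y, x = y + 1 := ⟨x - 1, by omega⟩
    have hj : j ≤ y := by omega
    rw [reverseBits_succ']
    have hmod : (c * 2 ^ (j+1) + t) % 2 = t % 2 := by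
      have h : c * 2 ^ (j+1) + t = 2 * (c * 2^j) + t := by ring
      rw [h, Nat.mul_add_mod]
    have hdiv : (c * 2 ^ (j+1) + t) / 2 = c * 2^j + t / 2 := by
      have h : c * 2 ^ (j+1) + t = 2 * (c * 2^j) + t := by ring
      rw [h, Nat.mul_add_div (by norm_num)]
    have ht2 : t / 2 < 2^j := by
      have : t < 2 * 2^j := by rw [← pow_succ']; exact ht
      omega
    rw [hmod, hdiv, ih y hj c (t/2) ht2, Nat.succ_sub_succ, reverseBits_succ']
    have hpow : (2:ℕ)^(y-j) * 2^j = 2^y := by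
      rw [← pow_add, Nat.sub_add_cancel hj]
    rw [mul_add, show (2:ℕ)^(y-j) * ((t % 2) * 2^j) = (t % 2) * 2^y from by
      rw [← hpow]; ring]
    ring

lemma mul_lt_iff_lt_ceilDiv' (d s e : ℕ) (hd : 0 < d) :
    d * s < e ↔ s < (e + d - 1) / d := by
  have h := Nat.le_div_iff_mul_le (k := d) (x := s+1) (y := e + d - 1) hd
  rw [add_mul, one_mul] at h
  have h2 : s < (e + d - 1) / d ↔ s + 1 ≤ (e + d - 1) / d := Iff.rfl
  rw [mul_comm d s, h2, h]
  omega

lemma blockSum' (x j c r q : ℕ) (len : ℕ → ℕ) (hj : j ≤ x) (hc : c < 2^(x-j))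
    (hr : r < 2^x)
    (hlen : ∀ i, 1 ≤ i → i ≤ 2^x →
      len i = if reverseBits x (i-1) < r then q+1 else q) :
    ∑ i ∈ Finset.Icc (c*2^j+1) (c*2^j+2^j), len i
      = 2^j * q + (r - reverseBits (x-j) c + 2^(x-j) - 1) / 2^(x-j) := by
  set d := 2^(x-j) with hdd
  set a := reverseBits (x-j) c with haa
  have hd : 0 < d := Nat.pow_pos (by norm_num)
  have ha : a < d := reverseBits_lt' (x-j) c
  have hdj : d * 2^j = 2^x := by rw [hdd, ← pow_add]; congr 1; omega
  have hsplit : ∀ t, t < 2^j →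
      reverseBits x (c*2^j+t) = d * reverseBits j t + a :=
    fun t ht => reverseBits_split' j x hj c t ht
  have hcard := card_filter_reverseBits j (fun s => d * s + a < r)
  have hx2 : 0 < 2^x := Nat.pow_pos (by norm_num)
  generalize hB : (2:ℕ)^j = B at hsplit hcard ⊢
  have hBpos : 0 < B := by rw [← hB]; exact Nat.pow_pos (by norm_num)
  have hbound : c*B + B ≤ 2^x := by
    have h1 : (c+1) * B ≤ d * B := Nat.mul_le_mul_right _ (by omega)
    have h2 : (c+1) * B = c*B + B := by ring
    rw [← hB, hdj, hB] at h1
    omega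
  have hIcc : Finset.Icc (c*B+1) (c*B+B)
      = Finset.Ico (c*B+1) (c*B+B+1) := by
    rw [Finset.Ico_add_one_right_eq_Icc]
  rw [hIcc, Finset.sum_Ico_eq_sum_range,
    show c*B+B+1 - (c*B+1) = B from by omega]
  have hsum : ∀ t ∈ Finset.range B,
      len (c*B+1+t) = q + if d * reverseBits j t + a < r then 1 else 0 := by
    intro t ht
    rw [Finset.mem_range] at ht
    rw [hlen _ (by omega) (by omega),
      show c*B+1+t-1 = c*B+t from by omega,
      hsplit t ht]
    split <;> omega
  rw [Finset.sum_congr rfl hsum, Finset.sum_add_distrib, Finset.sum_const,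
    Finset.card_range, smul_eq_mul, ← Finset.card_filter, hcard]
  have hK : (r - a + d - 1)/d ≤ B := by
    have h1 : r - a + d - 1 < (B + 1) * d := by
      have h2 : (B+1)*d = d * B + d := by ring
      have h3 : d * B = 2^x := by rw [← hB]; exact hdj
      rw [h2, h3]
      omega
    have := (Nat.div_lt_iff_lt_mul hd).mpr h1
    omega
  have hfil : (Finset.range B).filter (fun s => d*s + a < r)
      = Finset.range ((r - a + d - 1)/d) := by
    ext s
    simp only [Finset.mem_filter, Finset.mem_range]
    have h3 := mul_lt_iff_lt_ceilDiv' d s (r-a) hd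
    constructor
    · rintro ⟨_, h⟩
      exact h3.mp (by omega)
    · intro h
      exact ⟨lt_of_lt_of_le h hK, by have := h3.mpr h; omega⟩
  rw [hfil, Finset.card_range]

/-- correctness of the subquery length assignment, paper's Algorithm 2:
let `p = 2^x` with `x ≥ 1`, `r = m mod p`, and for `1 ≤ i ≤ p` let
`len i = ⌊m/p⌋ + 1` if `reverseBits x (i − 1) < r` and `len i = ⌊m/p⌋` otherwise.  Then
(a) `∑_{i=1}^{p} len i = m`, and (b) for every level `1 ≤ j ≤ x` and every block
`B = {c·2^j + 1, …, (c+1)·2^j}` with `c < 2^{x−j}`, the sum of `len` over the first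
half of `B` equals `⌈(∑_{i∈B} len i)/2⌉`. -/
theorem bit_reversal_assignment_correct (x : ℕ) (hx : 1 ≤ x) (m p r : ℕ)
    (hp : p = 2 ^ x) (hr : r = m % p) (len : ℕ → ℕ)
    (hlen : ∀ i, 1 ≤ i → i ≤ p →
      len i = if reverseBits x (i - 1) < r then m / p + 1 else m / p) :
    (∑ i ∈ Finset.Icc 1 p, len i) = m ∧
    ∀ j, 1 ≤ j → j ≤ x → ∀ c, c < 2 ^ (x - j) →
      (∑ i ∈ Finset.Icc (c * 2 ^ j + 1) (c * 2 ^ j + 2 ^ (j - 1)), len i) =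
        ((∑ i ∈ Finset.Icc (c * 2 ^ j + 1) ((c + 1) * 2 ^ j), len i) + 1) / 2 := by
  subst hp hr
  set q := m / 2^x with hq
  have hx2 : 0 < 2^x := Nat.pow_pos (by norm_num)
  have hrx : m % 2^x < 2^x := Nat.mod_lt m hx2
  have hm : 2^x * q + m % 2^x = m := Nat.div_add_mod m (2^x)
  constructor
  · have h0 := blockSum' x x 0 (m % 2^x) q len le_rfl (by simp) hrx hlen
    simp only [Nat.sub_self, pow_zero, reverseBits_zero', zero_mul, zero_add,
      Nat.sub_zero, Nat.add_sub_cancel, Nat.div_one] at h0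
    rw [h0, hm]
  · intro j hj1 hjx c hc
    have hj1x : j - 1 ≤ x := by omega
    have e2 : (2:ℕ)^j = 2 * 2^(j-1) := by rw [← pow_succ']; congr 1; omega
    have h2c : 2*c < 2^(x-(j-1)) := by
      have h : (2:ℕ)^(x-(j-1)) = 2 * 2^(x-j) := by rw [← pow_succ']; congr 1; omega
      omega
    have hL := blockSum' x (j-1) (2*c) (m % 2^x) q len hj1x h2c hrx hlen
    have hR := blockSum' x j c (m % 2^x) q len hjx hc hrx hlen
    have e1 : c * 2^j = (2*c) * 2^(j-1) := by rw [e2]; ring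
    rw [show (c+1) * 2^j = c*2^j + 2^j from by ring, hR, e1, hL]
    have e4 : x - (j-1) = (x-j) + 1 := by omega
    have e5 : reverseBits (x-(j-1)) (2*c) = reverseBits (x-j) c := by
      rw [e4, reverseBits_succ', Nat.mul_mod_right,
        Nat.mul_div_cancel_left c (by norm_num : (0:ℕ) < 2)]
      simp
    have e6 : (2:ℕ)^(x-(j-1)) = 2 * 2^(x-j) := by rw [e4, pow_succ']
    rw [e5, e6]
    set d := 2^(x-j) with hdd
    set a := reverseBits (x-j) c with haa
    have hd : 0 < d := Nat.pow_pos (by norm_num)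
    have e7 : (2:ℕ)^j * q = 2*(2^(j-1)*q) := by rw [e2]; ring
    rw [e7, show 2*(2^(j-1)*q) + (m % 2^x - a + d - 1)/d + 1
        = 2*(2^(j-1)*q) + ((m % 2^x - a + d - 1)/d + 1) from by ring,
      Nat.mul_add_div (by norm_num)]
    congr 1
    rw [show (m % 2^x - a + d - 1)/d + 1 = (m % 2^x - a + d - 1 + d)/d from
        (Nat.add_div_right _ hd).symm,
      Nat.div_div_eq_div_mul,
      show m % 2^x - a + d - 1 + d = m % 2^x - a + 2*d - 1 from by omega,
      mul_comm d 2]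
end
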